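/- Let n and α be natural numbers with α < n, and let 𝒫 be a finite family (Finset) of functions P : (Fin n → Bool) → List Bool such that 𝒫.card < 2^(α+1) and each P ∈ 𝒫 has prefix-free incomparable values: for all y ≠ y' in Fin n → Bool, P y is not a prefix of P y'. Then there exists y : Fin n → Bool such that for every P ∈ 𝒫, the length of P y is at least n − α. -/

import Mathlib

theorem exists_input_with_long_conversations
    (n α : ℕ) (hα : α < n)
    (Ps : Finset ((Fin n → Bool) → List Bool))
    (hcard : Ps.card < 2 ^ (α + 1))
    (hpf : ∀ P ∈ Ps, ∀ y y' : Fin n → Bool, y ≠ y' → ¬ P y <+: P y') :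
    ∃ y : Fin n → Bool, ∀ P ∈ Ps, n - α ≤ (P y).length := by
  classical
  set L := n - α with hL
  have hL1 : 1 ≤ L := by omega
  set Bad : ((Fin n → Bool) → List Bool) → Finset (Fin n → Bool) :=
    fun P => Finset.univ.filter (fun y => (P y).length < L) with hBad
  have hcardBad : ∀ P ∈ Ps, (Bad P).card ≤ 2 ^ (L - 1) := by
    intro P hP
    have : (Bad P).card ≤ Fintype.card (List.Vector Bool (L - 1)) := by
      apply Finset.card_le_card_of_injOn
        (fun y => if h : (P y).length ≤ L - 1 then
          ⟨P y ++ List.replicate (L - 1 - (P y).length) false, by simp; omega⟩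
          else default)
      · intro y _; exact Finset.mem_univ _
      · intro y hy y' hy' heq
        simp only [hBad, Finset.mem_coe, Finset.mem_filter] at hy hy'
        have h1 : (P y).length ≤ L - 1 := by omega
        have h2 : (P y').length ≤ L - 1 := by omega
        simp only [dif_pos h1, dif_pos h2] at heq
        have heq' : P y ++ List.replicate (L - 1 - (P y).length) false
            = P y' ++ List.replicate (L - 1 - (P y').length) false := by
          have := congrArg Subtype.val heq; simpa [h1, h2] using this
        by_contra hne
        have p1 : P y <+: P y' ++ List.replicate (L - 1 - (P y').length) false := by
          rw [← heq']; exact List.prefix_append _ _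
        have p2 : P y' <+: P y' ++ List.replicate (L - 1 - (P y').length) false :=
          List.prefix_append _ _
        rcases le_total (P y).length (P y').length with h | h
        · exact hpf P hP y y' hne (List.prefix_of_prefix_length_le p1 p2 h)
        · have p1' : P y' <+: P y ++ List.replicate (L - 1 - (P y).length) false := by
            rw [heq']; exact List.prefix_append _ _
          have p2' : P y <+: P y ++ List.replicate (L - 1 - (P y).length) false :=
            List.prefix_append _ _
          exact hpf P hP y' y (Ne.symm hne) (List.prefix_of_prefix_length_le p1' p2' h)
    simpa [card_vector] using this
  have hbig : (Ps.biUnion Bad).card < 2 ^ n := by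
    calc (Ps.biUnion Bad).card ≤ ∑ P ∈ Ps, (Bad P).card := Finset.card_biUnion_le
    _ ≤ ∑ _P ∈ Ps, 2 ^ (L - 1) := Finset.sum_le_sum hcardBad
    _ = Ps.card * 2 ^ (L - 1) := by rw [Finset.sum_const, smul_eq_mul]
    _ < 2 ^ (α + 1) * 2 ^ (L - 1) := by
        have hpos : 0 < 2 ^ (L - 1) := Nat.pow_pos (by norm_num)
        exact Nat.mul_lt_mul_of_lt_of_le hcard le_rfl hpos
    _ = 2 ^ (α + 1 + (L - 1)) := (pow_add 2 (α + 1) (L - 1)).symm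
    _ = 2 ^ n := by congr 1; omega
  have : Ps.biUnion Bad ≠ Finset.univ := by
    intro h
    rw [h, Finset.card_univ] at hbig
    simp at hbig
  obtain ⟨y, hy⟩ : ∃ y, y ∉ Ps.biUnion Bad := by
    by_contra h
    push_neg at h
    exact this (Finset.eq_univ_of_forall h)
  refine ⟨y, fun P hP => ?_⟩
  simp only [Finset.mem_biUnion, hBad, Finset.mem_filter, Finset.mem_univ, true_and,
    not_exists, not_and, not_lt] at hy
  exact hy P hP
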